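/- Let F ⊆ binom([n], k) be a family that does not contain a d-simplex. (1) If {B₁, …, B_{d+1}} is a d-simplex of subsets of a set B ⊆ [n], then the families F_B^{B₁}, …, F_B^{B_{d+1}} are (d+1)-wise cross intersecting. (2) If B₁, …, B_{d+1} ⊆ B have empty total intersection, then the families F_B^{B₁}, …, F_B^{B_{d+1}} are cross free of a d-simplex. -/
import Mathlib


open Finset

/-- `A` is a `d`-simplex: `d+1` sets with empty total intersection such that
the intersection of any `d` of them is nonempty. -/
def IsSimplex (n d : ℕ) (A : Fin (d + 1) → Finset (Fin n)) : Prop :=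
  Finset.univ.inf A = ∅ ∧ ∀ i, ((Finset.univ.erase i).inf A).Nonempty

theorem stmt18 (n k d : ℕ) (F : Finset (Finset (Fin n))) (hF : ∀ A ∈ F, A.card = k)
    (hfree : ¬ ∃ A : Fin (d + 1) → Finset (Fin n), (∀ i, A i ∈ F) ∧ IsSimplex n d A)
    (B : Finset (Fin n)) (Bs : Fin (d + 1) → Finset (Fin n)) (hBs : ∀ i, Bs i ⊆ B) :
    (IsSimplex n d Bs →
      ∀ D : Fin (d + 1) → Finset (Fin n),
        (∀ i, D i ∈ (F.filter (fun A => A ∩ B = Bs i)).image (fun A => A \ Bs i)) →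
        (Finset.univ.inf D).Nonempty) ∧
    (Finset.univ.inf Bs = ∅ →
      ¬ ∃ D : Fin (d + 1) → Finset (Fin n),
        (∀ i, D i ∈ (F.filter (fun A => A ∩ B = Bs i)).image (fun A => A \ Bs i)) ∧
        IsSimplex n d D) := by
  have hmem : ∀ (D : Fin (d + 1) → Finset (Fin n)),
      (∀ i, D i ∈ (F.filter (fun A => A ∩ B = Bs i)).image (fun A => A \ Bs i)) →
      ∃ A : Fin (d + 1) → Finset (Fin n),
        (∀ i, A i ∈ F) ∧ (∀ i, A i ∩ B = Bs i) ∧ (∀ i, D i = A i \ Bs i) := by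
    intro D hD
    choose A hA using fun i => Finset.mem_image.1 (hD i)
    exact ⟨A, fun i => (Finset.mem_filter.1 (hA i).1).1,
      fun i => (Finset.mem_filter.1 (hA i).1).2, fun i => ((hA i).2).symm⟩
  have hinf : ∀ (A : Fin (d + 1) → Finset (Fin n)), (∀ i, A i ∩ B = Bs i) →
      Finset.univ.inf Bs = ∅ → Finset.univ.inf (fun i => A i \ Bs i) = ∅ →
      Finset.univ.inf A = ∅ := by
    intro A hAB hBse hDe
    ext x
    simp only [Finset.mem_inf, Finset.mem_univ, true_implies, Finset.notMem_empty, iff_false]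
    intro hx
    by_cases hxB : x ∈ B
    · have hxBs : x ∈ Finset.univ.inf Bs := by
        rw [Finset.mem_inf]
        intro i _
        rw [← hAB i]; exact Finset.mem_inter.2 ⟨hx i, hxB⟩
      rw [hBse] at hxBs; exact absurd hxBs (Finset.notMem_empty x)
    · have hxD : x ∈ Finset.univ.inf (fun i => A i \ Bs i) := by
        rw [Finset.mem_inf]
        intro i _
        refine Finset.mem_sdiff.2 ⟨hx i, fun h => hxB ?_⟩
        rw [← hAB i] at h; exact (Finset.mem_inter.1 h).2
      rw [hDe] at hxD; exact absurd hxD (Finset.notMem_empty x)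
  constructor
  · rintro ⟨hBe, hBne⟩ D hD
    obtain ⟨A, hAF, hAB, hDA⟩ := hmem D hD
    by_contra hcon
    rw [Finset.not_nonempty_iff_eq_empty] at hcon
    refine hfree ⟨A, hAF, hinf A hAB hBe ?_, fun i => ?_⟩
    · have : (fun i => A i \ Bs i) = D := by ext i : 1; exact (hDA i).symm
      rw [this]; exact hcon
    · obtain ⟨x, hx⟩ := hBne i
      refine ⟨x, ?_⟩
      rw [Finset.mem_inf] at hx ⊢
      intro j hj
      have h := hx j hj
      rw [← hAB j] at h
      exact (Finset.mem_inter.1 h).1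
  · rintro hBe ⟨D, hD, hDe, hDne⟩
    obtain ⟨A, hAF, hAB, hDA⟩ := hmem D hD
    refine hfree ⟨A, hAF, hinf A hAB hBe ?_, fun i => ?_⟩
    · have : (fun i => A i \ Bs i) = D := by ext i : 1; exact (hDA i).symm
      rw [this]; exact hDe
    · obtain ⟨x, hx⟩ := hDne i
      refine ⟨x, ?_⟩
      rw [Finset.mem_inf] at hx ⊢
      intro j hj
      have h := hx j hj
      rw [hDA j] at h
      exact (Finset.mem_sdiff.1 h).1
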